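/- For all (a, k), (b, l) ∈ P_n, the intersection of principal right ideals satisfies (a, k) · P_n ∩ (b, l) · P_n = (lcm(a, b), 0) · P_n. In particular P_n is a right LCM monoid: the intersection of any two principal right ideals is again a (nonempty) principal right ideal. -/
import Mathlib


/-- The underlying set of the monoid `P_n = ℕ⁺ ⋉ ℤ/nℤ`: pairs `(a, k)` with `a` a
positive natural number and `k ∈ ℤ/nℤ`. -/
structure PM (n : ℕ) where
  a : ℕ+
  k : ZMod n

namespace PM

variable {n : ℕ}

/-- Multiplication `(a, k) · (b, l) = (a b, k·b̄ + l)`, where `b̄` is the image of `b`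
in `ℤ/nℤ`. -/
instance : Mul (PM n) :=
  ⟨fun x y => ⟨x.a * y.a, x.k * ((y.a : ℕ) : ZMod n) + y.k⟩⟩

/-- The identity element `(1, 0)`. -/
instance : One (PM n) := ⟨⟨1, 0⟩⟩

@[simp] lemma mul_def (x y : PM n) :
    x * y = ⟨x.a * y.a, x.k * ((y.a : ℕ) : ZMod n) + y.k⟩ := rfl

@[simp] lemma one_def : (1 : PM n) = ⟨1, 0⟩ := rfl

/-- `P_n = ℕ⁺ ⋉ ℤ/nℤ` is a monoid. -/
instance : Monoid (PM n) where
  mul_assoc x y z := by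
    simp only [mul_def, PM.mk.injEq]
    exact ⟨mul_assoc _ _ _, by push_cast; ring⟩
  one_mul x := by
    obtain ⟨a, k⟩ := x
    simp
  mul_one x := by
    obtain ⟨a, k⟩ := x
    simp

/-- The principal right ideal `x · P_n = { x · y : y ∈ P_n }`. -/
def rIdeal (x : PM n) : Set (PM n) := Set.range (fun y => x * y)

lemma mem_rIdeal_iff (a : ℕ+) (k : ZMod n) (z : PM n) :
    z ∈ PM.rIdeal (⟨a, k⟩ : PM n) ↔ a ∣ z.a := by
  constructor
  · rintro ⟨y, rfl⟩
    exact ⟨y.a, rfl⟩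
  · rintro ⟨c, hc⟩
    exact ⟨⟨c, z.k - k * ((c : ℕ) : ZMod n)⟩, by
      obtain ⟨d, j⟩ := z
      simp_all⟩

end PM

/-- **`P_n` is a right LCM monoid.**  For all `(a, k), (b, l) ∈ P_n`,
`(a, k) · P_n ∩ (b, l) · P_n = (lcm(a, b), 0) · P_n`.  In particular the intersection of
any two principal right ideals of `P_n` is again a (nonempty) principal right ideal. -/
theorem PM.rIdeal_inter (n : ℕ) (hn : 1 ≤ n) :
    (∀ (a b : ℕ+) (k l : ZMod n),
        PM.rIdeal (⟨a, k⟩ : PM n) ∩ PM.rIdeal (⟨b, l⟩ : PM n) =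
          PM.rIdeal (⟨PNat.lcm a b, 0⟩ : PM n)) ∧
      ∀ x y : PM n, ∃ z : PM n,
        PM.rIdeal x ∩ PM.rIdeal y = PM.rIdeal z ∧ (PM.rIdeal x ∩ PM.rIdeal y).Nonempty := by
  have key : ∀ (a b : ℕ+) (k l : ZMod n),
      PM.rIdeal (⟨a, k⟩ : PM n) ∩ PM.rIdeal (⟨b, l⟩ : PM n) =
        PM.rIdeal (⟨PNat.lcm a b, 0⟩ : PM n) := by
    intro a b k l
    ext z
    simp only [Set.mem_inter_iff, PM.mem_rIdeal_iff]
    constructor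
    · rintro ⟨h1, h2⟩
      exact PNat.lcm_dvd h1 h2
    · intro h
      exact ⟨dvd_trans (PNat.dvd_lcm_left a b) h, dvd_trans (PNat.dvd_lcm_right a b) h⟩
  refine ⟨key, fun x y => ⟨⟨PNat.lcm x.a y.a, 0⟩, ?_, ?_⟩⟩
  · have := key x.a y.a x.k y.k
    simpa using this
  · refine ⟨⟨PNat.lcm x.a y.a, 0⟩, ?_, ?_⟩ <;>
      rw [PM.mem_rIdeal_iff (z := (⟨PNat.lcm x.a y.a, 0⟩ : PM n))]
    · exact PNat.dvd_lcm_left _ _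
    · exact PNat.dvd_lcm_right _ _
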